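/- If P ⊆ ℝ^N is a convex and CP admissible set, then the dimension of P (i.e., the dimension of the affine hull of P) equals max{ |supp(x)| : x ∈ P }. -/

import Mathlib

open Set

/-- `P` is coordinate projection (CP) admissible: for every `x ∈ P` and every
index set `J ⊆ supp(x)`, the coordinate projection `π_J(x)` belongs to `P`. -/
def CPAdmissible {N : ℕ} (P : Set (Fin N → ℝ)) : Prop :=
  ∀ x ∈ P, ∀ J : Set (Fin N), J ⊆ {i | x i ≠ 0} → J.indicator x ∈ P

set_option maxHeartbeats 1000000 in
/-- For a convex and CP admissible set `P`, the dimension of `P` (the dimension of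
its affine hull) equals `max { |supp(x)| : x ∈ P }`. -/
theorem stmt_6 {N : ℕ} (P : Set (Fin N → ℝ)) (hne : P.Nonempty)
    (hconv : Convex ℝ P) (hcp : CPAdmissible P) :
    Module.finrank ℝ (affineSpan ℝ P).direction =
      sSup {n : ℕ | ∃ x ∈ P, {i | x i ≠ 0}.ncard = n} := by
  classical
  set A : Set ℕ := {n : ℕ | ∃ x ∈ P, {i | x i ≠ 0}.ncard = n} with hA
  have hAne : A.Nonempty := ⟨_, hne.choose, hne.choose_spec, rfl⟩
  have hAbdd : BddAbove A := by
    refine ⟨N, fun n hn => ?_⟩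
    obtain ⟨x, -, rfl⟩ := hn
    calc {i | x i ≠ 0}.ncard ≤ (Set.univ : Set (Fin N)).ncard :=
          Set.ncard_le_ncard (subset_univ _) (toFinite _)
      _ = N := by simp [Set.ncard_univ]
  set s := sSup A with hs
  obtain ⟨x, hx, hxs⟩ : ∃ x ∈ P, {i | x i ≠ 0}.ncard = s := Nat.sSup_mem hAne hAbdd
  have hub : ∀ y ∈ P, {i | y i ≠ 0}.ncard ≤ s := fun y hy =>
    le_csSup hAbdd ⟨y, hy, rfl⟩
  -- 0 ∈ P
  have h0 : (0 : Fin N → ℝ) ∈ P := by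
    have := hcp x hx ∅ (empty_subset _)
    simp at this; exact this
  -- key: every support is contained in supp x
  have hsupp : ∀ y ∈ P, ∀ i, y i ≠ 0 → x i ≠ 0 := by
    intro y hy j hyj
    by_contra hxj
    -- pick good t
    have hinf : (Set.Ioo (0:ℝ) 1 \ Set.range (fun i => x i / (x i - y i))).Infinite :=
      (Set.Ioo_infinite (by norm_num)).diff (Set.finite_range _)
    obtain ⟨t, ht⟩ := hinf.nonempty
    obtain ⟨⟨ht0, ht1⟩, htF⟩ := ht
    set z : Fin N → ℝ := (1 - t) • x + t • y with hz
    have hzP : z ∈ P := hconv hx hy (by linarith) (le_of_lt ht0) (by ring)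
    have hsub : insert j {i | x i ≠ 0} ⊆ {i | z i ≠ 0} := by
      intro i hi
      rcases hi with rfl | hi
      · have : z i = t * y i := by simp [hz, hxj]
        simp only [mem_setOf_eq, this]
        exact mul_ne_zero (ne_of_gt ht0) hyj
      · simp only [mem_setOf_eq] at hi ⊢
        intro hzi
        have hzi' : x i + t * (y i - x i) = 0 := by
          have : (1 - t) * x i + t * y i = 0 := hzi
          linarith [this]
        have hxyi : x i - y i ≠ 0 := by
          intro h
          have : y i = x i := by linarith
          rw [this] at hzi'
          apply hi; linarith
        apply htF
        refine ⟨i, ?_⟩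
        field_simp
        linarith
    have hcard : s + 1 ≤ {i | z i ≠ 0}.ncard := by
      have h1 : (insert j {i | x i ≠ 0}).ncard = s + 1 := by
        rw [Set.ncard_insert_of_notMem (by simpa using hxj) (toFinite _), hxs]
      rw [← h1]
      exact Set.ncard_le_ncard hsub (toFinite _)
    have := hub z hzP
    omega
  -- the finset of the support of x
  set T : Finset (Fin N) := Finset.univ.filter (fun i => x i ≠ 0) with hT
  have hTcard : T.card = s := by
    rw [← hxs]
    rw [Set.ncard_eq_toFinset_card']
    congr 1
    ext i
    simp [hT]
  set b : T → (Fin N → ℝ) := fun i => Pi.single (i : Fin N) (x i) with hb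
  have hbx : ∀ i : T, x (i : Fin N) ≠ 0 := by
    intro i
    exact (Finset.mem_filter.mp i.2).2
  have hbP : ∀ i : T, b i ∈ P := by
    intro i
    have := hcp x hx {(i : Fin N)} (by intro j hj; simp at hj; subst hj; exact hbx i)
    convert this using 1
    funext j
    by_cases h : j = (i : Fin N)
    · subst h; simp [hb, Set.indicator_apply]
    · simp [hb, Set.indicator_apply, Pi.single_apply, h, Ne.symm h]
  have hli : LinearIndependent ℝ b := by
    have h0' : LinearIndependent ℝ (fun i : Fin N => Pi.single i (1 : ℝ)) := by
      have := (Pi.basisFun ℝ (Fin N)).linearIndependent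
      have he : ⇑(Pi.basisFun ℝ (Fin N)) = fun i : Fin N => Pi.single i (1 : ℝ) := by
        funext i; exact Pi.basisFun_apply ℝ (Fin N) i
      rwa [he] at this
    have h1 : LinearIndependent ℝ (fun i : T => (Pi.single (i : Fin N) (1 : ℝ) : Fin N → ℝ)) :=
      h0'.comp _ Subtype.val_injective
    have heq : b = (fun i : T => (Units.mk0 (x i) (hbx i))) • (fun i : T => (Pi.single (i : Fin N) (1 : ℝ) : Fin N → ℝ)) := by
      funext i j
      simp only [hb, Pi.smul_apply', Units.smul_def, Units.val_mk0, Pi.smul_apply,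
        smul_eq_mul, Pi.single_apply]
      split_ifs <;> ring
    rw [heq]
    exact h1.units_smul _
  have hspan : Submodule.span ℝ P = Submodule.span ℝ (Set.range b) := by
    apply le_antisymm
    · rw [Submodule.span_le]
      intro y hy
      have hyrep : y = ∑ i : Fin N, Pi.single i (y i) := (Finset.univ_sum_single y).symm
      rw [hyrep]
      apply Submodule.sum_mem
      intro i _
      by_cases hyi : y i = 0
      · simp [hyi]
      · have hxi : x i ≠ 0 := hsupp y hy i hyi
        have hiT : i ∈ T := by simp [hT, hxi]
        have : Pi.single i (y i) = (y i / x i) • b ⟨i, hiT⟩ := by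
          funext j
          by_cases h : j = i
          · subst h; simp [hb, div_mul_cancel₀, hxi]
          · simp [hb, Pi.single_apply, h]
        rw [this]
        exact Submodule.smul_mem _ _ (Submodule.subset_span (Set.mem_range_self _))
    · rw [Submodule.span_le]
      rintro _ ⟨i, rfl⟩
      exact Submodule.subset_span (hbP i)
  have hdir : (affineSpan ℝ P).direction = Submodule.span ℝ P := by
    rw [direction_affineSpan]
    apply le_antisymm
    · rw [vectorSpan_def, Submodule.span_le]
      rintro v hv
      obtain ⟨p, hp, q, hq, rfl⟩ := hv
      exact sub_mem (Submodule.subset_span hp) (Submodule.subset_span hq)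
    · rw [Submodule.span_le]
      intro p hp
      have : p -ᵥ (0 : Fin N → ℝ) ∈ vectorSpan ℝ P := vsub_mem_vectorSpan ℝ hp h0
      simpa using this
  rw [hdir, hspan, finrank_span_eq_card hli]
  simp [Fintype.card_coe, hTcard]
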